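/- arXiv:2603.08986 — 2 statements merged into one kernel-verified Lean document; each statement's English description precedes it below -/
import Mathlib

section
/- Let g be a finite-dimensional basic Z₂×Z₂-graded Lie algebra with nondegenerate Killing form K, let {Z_i} be a homogeneous basis orthonormal with respect to K, and let Ω = Σ_i Z_i² in the universal enveloping algebra U(g). Then Ω is central in U(g): [X,Ω] = XΩ − ΩX = 0 for all X ∈ g. -/
abbrev Z22 : Type := ZMod 2 × ZMod 2

/-- The commutation factor `ε((a₁,a₂),(b₁,b₂)) = a₁b₂ - a₂b₁ ∈ ℤ/2`. -/
def eps (a b : Z22) : ZMod 2 := a.1 * b.2 - a.2 * b.1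

/-- The sign `(-1)^{ε(a,b)}` as a complex number. -/
noncomputable def sgn (a b : Z22) : ℂ := if eps a b = 0 then 1 else -1

/-- A `ℤ₂×ℤ₂`-graded (color) complex Lie algebra structure on a module `L`. -/
structure ColorLie (L : Type) [AddCommGroup L] [Module ℂ L] : Type where
  bracket : L →ₗ[ℂ] L →ₗ[ℂ] L
  grade : Z22 → Submodule ℂ L
  direct : DirectSum.IsInternal grade
  bracket_grade : ∀ a b : Z22, ∀ x ∈ grade a, ∀ y ∈ grade b,
    bracket x y ∈ grade (a + b)
  antisymm : ∀ a b : Z22, ∀ x ∈ grade a, ∀ y ∈ grade b,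
    bracket x y = -(sgn a b) • bracket y x
  jacobi : ∀ a b : Z22, ∀ x ∈ grade a, ∀ y ∈ grade b, ∀ z : L,
    bracket x (bracket y z) =
      bracket (bracket x y) z + sgn a b • bracket y (bracket x z)

variable {L : Type} [AddCommGroup L] [Module ℂ L]

/-- The Killing form `K(x,y) = tr(ad x ∘ ad y)`. -/
noncomputable def killing (C : ColorLie L) (x y : L) : ℂ :=
  LinearMap.trace ℂ L (C.bracket x ∘ₗ C.bracket y)

/-- The adjoint action viewed as an endomorphism. -/
def adE (C : ColorLie L) (x : L) : Module.End ℂ L := C.bracket x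

/-- A `ℤ₂×ℤ₂`-graded ideal. -/
def IsGradedIdeal (C : ColorLie L) (I : Submodule ℂ L) : Prop :=
  (∀ x : L, ∀ y ∈ I, C.bracket x y ∈ I) ∧ I = ⨆ a : Z22, (I ⊓ C.grade a)

/-- Simplicity: no nontrivial proper graded ideal. -/
def ColorLie.IsSimple (C : ColorLie L) : Prop :=
  C.bracket ≠ 0 ∧ ∀ I : Submodule ℂ L, IsGradedIdeal C I → I = ⊥ ∨ I = ⊤

/-- An ideal of the Lie algebra `g^{(0,0)}`. -/
def IsIdeal0 (C : ColorLie L) (I : Submodule ℂ L) : Prop :=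
  I ≤ C.grade (0, 0) ∧ ∀ x ∈ C.grade (0, 0), ∀ y ∈ I, C.bracket x y ∈ I

/-- `g^{(0,0)}` is reductive: every ideal admits a complementary ideal
(a standard characterization of reductivity in characteristic zero). -/
def IsReductive0 (C : ColorLie L) : Prop :=
  ∀ I : Submodule ℂ L, IsIdeal0 C I →
    ∃ J : Submodule ℂ L, IsIdeal0 C J ∧ I ⊓ J = ⊥ ∧ I ⊔ J = C.grade (0, 0)

/-- Nondegeneracy of the Killing form. -/
def IsKillingNondeg (C : ColorLie L) : Prop :=
  ∀ x : L, (∀ y : L, killing C x y = 0) → x = 0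

/-- A Cartan subalgebra of `g^{(0,0)}`: a nilpotent self-normalizing subalgebra
(nilpotency via Engel's criterion). -/
structure IsCartan (C : ColorLie L) (t : Submodule ℂ L) : Prop where
  le : t ≤ C.grade (0, 0)
  bracket_mem : ∀ x ∈ t, ∀ y ∈ t, C.bracket x y ∈ t
  nilpotent : ∀ h ∈ t, ∃ n : ℕ, ∀ x ∈ t, ((adE C h) ^ n) x = 0
  self_normalizing : ∀ x ∈ C.grade (0, 0), (∀ h ∈ t, C.bracket h x ∈ t) → x ∈ t

/-- The generalized root space `g_α`. -/
noncomputable def genRootSpace (C : ColorLie L) (t : Submodule ℂ L)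
    (α : Module.Dual ℂ t) : Submodule ℂ L :=
  ⨅ h : t, (adE C h.1).maxGenEigenspace (α h)

/-- The (proper) root space `g_α = {x | [h,x] = α(h)x ∀ h ∈ t}`. -/
noncomputable def rootSpace (C : ColorLie L) (t : Submodule ℂ L)
    (α : Module.Dual ℂ t) : Submodule ℂ L :=
  ⨅ h : t, (adE C h.1).eigenspace (α h)

/-- `α` is a (generalized) root. -/
def IsRoot (C : ColorLie L) (t : Submodule ℂ L) (α : Module.Dual ℂ t) : Prop :=
  α ≠ 0 ∧ genRootSpace C t α ≠ ⊥

/-- A representation of the color Lie algebra `g` on `V`. -/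
def IsRep (C : ColorLie L) {V : Type} [AddCommGroup V] [Module ℂ V]
    (φ : L →ₗ[ℂ] Module.End ℂ V) : Prop :=
  ∀ a b : Z22, ∀ x ∈ C.grade a, ∀ y ∈ C.grade b,
    φ (C.bracket x y) = φ x * φ y - sgn a b • (φ y * φ x)
/- ### Auxiliary lemmas for stmt15 -/

lemma sgn_mul_self' (a b : Z22) : sgn a b * sgn a b = 1 := by
  unfold sgn; split <;> norm_num

lemma sgn_eq_of_sum_zero (c a b : Z22) (h : c + a + b = 0) : sgn c a = sgn c b := by
  have : eps c a = eps c b := by revert h; revert c a b; decide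
  unfold sgn; rw [this]

/-- `ad` of a bracket of homogeneous elements. -/
lemma adE_bracket' (C : ColorLie L) {a b : Z22} {x y : L}
    (hx : x ∈ C.grade a) (hy : y ∈ C.grade b) :
    adE C (C.bracket x y) = adE C x * adE C y - sgn a b • (adE C y * adE C x) := by
  ext z
  have h := C.jacobi a b x hx y hy z
  simp only [adE, LinearMap.sub_apply, LinearMap.smul_apply, Module.End.mul_apply] at *
  rw [h]; abel

/-- The Killing form as a linear map in its first argument. -/
noncomputable def killingF (C : ColorLie L) (y : L) : L →ₗ[ℂ] ℂ where
  toFun x := killing C x y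
  map_add' x x' := by simp [killing, map_add, LinearMap.add_comp]
  map_smul' c x := by simp [killing, map_smul, LinearMap.smul_comp]

lemma killingF_apply (C : ColorLie L) (x y : L) : killingF C y x = killing C x y := rfl

/-- Expansion in a `K`-orthonormal basis. -/
lemma repr_killing [FiniteDimensional ℂ L] (C : ColorLie L)
    {ι : Type} [Fintype ι] [DecidableEq ι] (Z : Module.Basis ι ℂ L)
    (horth : ∀ i j, killing C (Z i) (Z j) = if i = j then 1 else 0) (v : L) :
    v = ∑ j, killing C v (Z j) • Z j := by
  have key : ∀ j, killing C v (Z j) = Z.repr v j := by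
    intro j
    rw [← killingF_apply]
    conv_lhs => rw [← Z.sum_repr v]
    rw [map_sum]
    simp only [map_smul, killingF_apply, horth, smul_eq_mul, mul_ite, mul_one, mul_zero]
    simp [Finset.sum_ite_eq']
  conv_lhs => rw [← Z.sum_repr v]
  exact Finset.sum_congr rfl fun j _ => by rw [key j]

lemma grade_ne_add (g : Z22) (hg : g ≠ 0) : ∀ e : Z22, g + e ≠ e := by
  intro e h
  exact hg (by simpa using congrArg (· + (-e)) h)

/-- Trace of a grade-shifting composite vanishes. -/
lemma trace_shift_zero [FiniteDimensional ℂ L] (C : ColorLie L) {g : Z22} (hg : g ≠ 0)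
    {f : Module.End ℂ L} (hf : ∀ e : Z22, Set.MapsTo f (C.grade e) (C.grade (g + e))) :
    LinearMap.trace ℂ L f = 0 :=
  LinearMap.trace_eq_zero_of_mapsTo_ne C.direct (fun e => g + e) (grade_ne_add g hg) hf

/-- Graded invariance of the Killing form (combined form). -/
lemma killing_invariance [FiniteDimensional ℂ L] (C : ColorLie L)
    {c a b : Z22} {X u v : L}
    (hX : X ∈ C.grade c) (hu : u ∈ C.grade a) (hv : v ∈ C.grade b) :
    killing C (C.bracket X u) v + sgn c b * killing C (C.bracket X v) u = 0 := by
  set Ax := adE C X with hAx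
  set Au := adE C u with hAu
  set Av := adE C v with hAv
  set T1 := LinearMap.trace ℂ L (Ax * Au * Av) with hT1
  set T2 := LinearMap.trace ℂ L (Ax * Av * Au) with hT2
  have e1 : killing C (C.bracket X u) v = T1 - sgn c a * T2 := by
    have h0 : killing C (C.bracket X u) v
        = LinearMap.trace ℂ L (adE C (C.bracket X u) * Av) := rfl
    rw [h0, adE_bracket' C hX hu, sub_mul, smul_mul_assoc, map_sub, map_smul]
    rw [mul_assoc Au Ax Av, LinearMap.trace_mul_comm ℂ Au (Ax * Av)]
    simp [← hAx, ← hAu, ← hAv, smul_eq_mul, hT1, hT2]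
  have e2 : killing C (C.bracket X v) u = T2 - sgn c b * T1 := by
    have h0 : killing C (C.bracket X v) u
        = LinearMap.trace ℂ L (adE C (C.bracket X v) * Au) := rfl
    rw [h0, adE_bracket' C hX hv, sub_mul, smul_mul_assoc, map_sub, map_smul]
    rw [mul_assoc Av Ax Au, LinearMap.trace_mul_comm ℂ Av (Ax * Au)]
    simp [← hAx, ← hAu, ← hAv, smul_eq_mul, hT1, hT2]
  have hs := sgn_mul_self' c b
  rw [e1, e2]
  rcases eq_or_ne (c + a + b) 0 with h0 | h0
  · rw [sgn_eq_of_sum_zero c a b h0]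
    linear_combination (-T1) * hs
  · have hT2z : T2 = 0 := by
      rw [hT2]
      refine trace_shift_zero C (g := c + b + a) ?_ ?_
      · intro hz; apply h0
        rw [show c + a + b = c + b + a by abel, hz]
      · intro e z hz
        have h1 : Au z ∈ C.grade (a + e) := C.bracket_grade a e u hu z hz
        have h2 : Av (Au z) ∈ C.grade (b + (a + e)) :=
          C.bracket_grade _ _ v hv _ h1
        have h3 : Ax (Av (Au z)) ∈ C.grade (c + (b + (a + e))) :=
          C.bracket_grade _ _ X hX _ h2
        have heq : c + (b + (a + e)) = c + b + a + e := by abel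
        rw [heq] at h3
        exact h3
    rw [hT2z]
    linear_combination (-T1) * hs

/-- The Casimir element `Ω = Σᵢ Zᵢ²` built from a homogeneous `K`-orthonormal basis
is central in the universal enveloping algebra: in any associative algebra `A`
together with a linear map `φ : g → A` satisfying the defining relations of `U(g)`
(in particular in `U(g)` itself), `φ(X)` commutes with `Σᵢ φ(Zᵢ)²` for all `X ∈ g`. -/
theorem stmt15 [FiniteDimensional ℂ L] (C : ColorLie L)
    (hnd : IsKillingNondeg C) (hred : IsReductive0 C)
    {ι : Type} [Fintype ι] [DecidableEq ι] (Z : Module.Basis ι ℂ L) (d : ι → Z22)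
    (hZ : ∀ i, Z i ∈ C.grade (d i))
    (horth : ∀ i j, killing C (Z i) (Z j) = if i = j then 1 else 0)
    {A : Type} [Ring A] [Algebra ℂ A] (φ : L →ₗ[ℂ] A)
    (hrel : ∀ a b : Z22, ∀ x ∈ C.grade a, ∀ y ∈ C.grade b,
      φ (C.bracket x y) = φ x * φ y - sgn a b • (φ y * φ x)) :
    ∀ X : L, φ X * (∑ i, φ (Z i) * φ (Z i)) = (∑ i, φ (Z i) * φ (Z i)) * φ X := by
  classical
  intro X
  set S : A := ∑ i, φ (Z i) * φ (Z i) with hS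
  have key : ∀ c : Z22, ∀ Y ∈ C.grade c, φ Y * S = S * φ Y := by
    intro c Y hY
    set W : ι → L := fun i => C.bracket Y (Z i) with hW
    set s : ι → ℂ := fun i => sgn c (d i) with hs
    set a : ι → ι → ℂ := fun i j => killing C (W i) (Z j) with ha
    have step2 : ∀ i, φ Y * (φ (Z i) * φ (Z i)) - (φ (Z i) * φ (Z i)) * φ Y =
        φ (W i) * φ (Z i) + s i • (φ (Z i) * φ (W i)) := by
      intro i
      have hss : s i * s i = 1 := sgn_mul_self' c (d i)
      have hw : φ (W i) = φ Y * φ (Z i) - s i • (φ (Z i) * φ Y) :=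
        hrel c (d i) Y hY (Z i) (hZ i)
      rw [hw]
      simp only [sub_mul, mul_sub, smul_sub, smul_mul_assoc, mul_smul_comm,
        smul_smul, hss, one_smul, mul_assoc]
      abel
    have expand : ∀ i, φ (W i) = ∑ j, a i j • φ (Z j) := by
      intro i
      conv_lhs => rw [repr_killing C Z horth (W i)]
      rw [map_sum]
      simp only [map_smul, ha]
    have comm0 : φ Y * S - S * φ Y =
        ∑ i, (φ (W i) * φ (Z i) + s i • (φ (Z i) * φ (W i))) := by
      rw [hS, Finset.mul_sum, Finset.sum_mul, ← Finset.sum_sub_distrib]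
      exact Finset.sum_congr rfl fun i _ => step2 i
    have comm1 : φ Y * S - S * φ Y =
        ∑ i, ∑ j, ((a i j + s j * a j i) • (φ (Z j) * φ (Z i))) := by
      rw [comm0]
      have h1 : ∀ i, φ (W i) * φ (Z i) = ∑ j, a i j • (φ (Z j) * φ (Z i)) := by
        intro i
        rw [expand i, Finset.sum_mul]
        exact Finset.sum_congr rfl fun j _ => smul_mul_assoc _ _ _
      have h2 : ∀ i, s i • (φ (Z i) * φ (W i)) =
          ∑ j, (s i * a i j) • (φ (Z i) * φ (Z j)) := by
        intro i
        rw [expand i, Finset.mul_sum, Finset.smul_sum]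
        refine Finset.sum_congr rfl fun j _ => ?_
        rw [mul_smul_comm, smul_smul]
      simp only [h1, h2, Finset.sum_add_distrib]
      simp only [add_smul, Finset.sum_add_distrib]
      congr 1
      exact Finset.sum_comm
    have hzero : ∀ i j, a i j + s j * a j i = 0 := by
      intro i j
      exact killing_invariance C hY (hZ i) (hZ j)
    have : φ Y * S - S * φ Y = 0 := by
      rw [comm1]
      simp only [hzero, zero_smul, Finset.sum_const_zero]
    exact sub_eq_zero.mp this
  have hXtop : X ∈ ⨆ e, C.grade e := by
    rw [C.direct.submodule_iSup_eq_top]; trivial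
  refine Submodule.iSup_induction (motive := fun v => φ v * S = S * φ v)
    C.grade hXtop key ?_ ?_
  · simp
  · intro x y hx hy
    rw [map_add, add_mul, mul_add, hx, hy]
end

section
/- Let g be a basic simple Z₂×Z₂-graded Lie algebra with self-centralizing Cartan subalgebra t and Weyl group W generated by the reflections s_α(β) = β − 2(⟨β,α⟩/⟨α,α⟩)α for α ∈ Δ. Then W permutes the root system Δ: for all α, β ∈ Δ, s_α(β) ∈ Δ. -/
variable {L : Type} [AddCommGroup L] [Module ℂ L]

section Aux

variable {L : Type} [AddCommGroup L] [Module ℂ L] (C : ColorLie L)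

/-- The sign character `χ : ZMod 2 → ℂ`. -/
noncomputable def chi (x : ZMod 2) : ℂ := if x = 0 then 1 else -1

lemma chi_add (x y : ZMod 2) : chi (x + y) = chi x * chi y := by
  have hx : x = 0 ∨ x = 1 := by revert x; decide
  have hy : y = 0 ∨ y = 1 := by revert y; decide
  rcases hx with rfl | rfl <;> rcases hy with rfl | rfl <;> norm_num [chi] <;> decide

lemma chi_mul_self (x : ZMod 2) : chi x * chi x = 1 := by
  have hx : x = 0 ∨ x = 1 := by revert x; decide
  rcases hx with rfl | rfl <;> norm_num [chi]

lemma sgn_eq_chi (a b : Z22) : sgn a b = chi (eps a b) := rfl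

/-- The discoloration cocycle `σ(a,b) = (-1)^{a₂ b₁}`. -/
noncomputable def sig (a b : Z22) : ℂ := chi (a.2 * b.1)

lemma sig_zero_left (b : Z22) : sig (0, 0) b = 1 := by simp [sig, chi]

lemma sig_zero_right (a : Z22) : sig a (0, 0) = 1 := by simp [sig, chi]

lemma sig_mul_sgn (a b : Z22) : sig a b * sgn a b = sig b a := by
  rw [sig, sig, sgn_eq_chi, ← chi_add]
  congr 1
  simp only [eps]
  ring

lemma sig_jacobi₁ (a b c : Z22) :
    sig b c * sig a (b + c) = sig a b * sig (a + b) c := by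
  rw [sig, sig, sig, sig, ← chi_add, ← chi_add]
  congr 1
  simp only [Prod.snd_add, Prod.fst_add]
  ring

lemma sig_jacobi₂ (a b c : Z22) :
    (sig b c * sig a (b + c)) * sgn a b = sig a c * sig b (a + c) := by
  rw [sig, sig, sig, sig, sgn_eq_chi, ← chi_add, ← chi_add, ← chi_add]
  congr 1
  simp only [Prod.snd_add, Prod.fst_add, eps]
  ring

/-- `(-1)^{a₁ a₂}`. -/
noncomputable def esgn (a : Z22) : ℂ := chi (a.1 * a.2)

lemma sig_self_shift (a c : Z22) : sig a c * sig a (a + c) = esgn a := by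
  rw [sig, sig, esgn, ← chi_add]
  congr 1
  simp only [Prod.fst_add]
  have : ∀ x : ZMod 2, x + x = 0 := by decide
  calc a.2 * c.1 + a.2 * (a.1 + c.1) = a.1 * a.2 + (a.2 * c.1 + a.2 * c.1) := by ring
  _ = a.1 * a.2 := by rw [this, add_zero]

lemma esgn_mul_self (a : Z22) : esgn a * esgn a = 1 := chi_mul_self _

/-- The projection onto the graded component `a`. -/
noncomputable def pr (a : Z22) : L →ₗ[ℂ] L :=
  (C.grade a).subtype ∘ₗ
    (DirectSum.component ℂ Z22 (fun b => C.grade b) a) ∘ₗ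
      (LinearEquiv.ofBijective (DirectSum.coeLinearMap C.grade) C.direct).symm.toLinearMap

lemma pr_apply_of_mem {a : Z22} {x : L} (hx : x ∈ C.grade a) : pr C a x = x := by
  simp only [pr, LinearMap.coe_comp, LinearEquiv.coe_coe, Function.comp_apply,
    Submodule.coe_subtype, ← DirectSum.apply_eq_component,
    C.direct.ofBijective_coeLinearMap_of_mem hx]

lemma pr_apply_of_mem_ne {a b : Z22} (hab : a ≠ b) {x : L} (hx : x ∈ C.grade a) :
    pr C b x = 0 := by
  simp only [pr, LinearMap.coe_comp, LinearEquiv.coe_coe, Function.comp_apply,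
    Submodule.coe_subtype, ← DirectSum.apply_eq_component,
    C.direct.ofBijective_coeLinearMap_of_mem_ne hab hx, ZeroMemClass.coe_zero]

lemma pr_mem (a : Z22) (x : L) : pr C a x ∈ C.grade a := by
  simp only [pr, LinearMap.coe_comp, Function.comp_apply, Submodule.coe_subtype]
  exact Submodule.coe_mem _

lemma sum_pr (x : L) : ∑ a : Z22, pr C a x = x := by
  set e := LinearEquiv.ofBijective (DirectSum.coeLinearMap C.grade) C.direct with he
  have h1 : x = DirectSum.coeLinearMap C.grade (e.symm x) := (e.apply_symm_apply x).symm
  conv_rhs => rw [h1, ← DirectSum.sum_univ_of (e.symm x)]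
  rw [map_sum]
  exact Finset.sum_congr rfl fun a _ => by
    simp only [pr, LinearMap.coe_comp, LinearEquiv.coe_coe, Function.comp_apply,
      Submodule.coe_subtype, ← DirectSum.apply_eq_component, DirectSum.coeLinearMap_of, he]

end Aux
section Twist

variable {L : Type} [AddCommGroup L] [Module ℂ L] (C : ColorLie L)

/-- The discolored ("twisted") bracket, an honest Lie bracket. -/
noncomputable def tbr : L →ₗ[ℂ] L →ₗ[ℂ] L :=
  ∑ a : Z22, ∑ b : Z22, sig a b • (C.bracket.compl₁₂ (pr C a) (pr C b))

lemma tbr_apply (x y : L) :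
    tbr C x y = ∑ a : Z22, ∑ b : Z22, sig a b • C.bracket (pr C a x) (pr C b y) := by
  simp [tbr, LinearMap.sum_apply, LinearMap.smul_apply, LinearMap.compl₁₂_apply]

lemma tbr_graded {a b : Z22} {x y : L} (hx : x ∈ C.grade a) (hy : y ∈ C.grade b) :
    tbr C x y = sig a b • C.bracket x y := by
  rw [tbr_apply]
  rw [Finset.sum_eq_single a]
  · rw [Finset.sum_eq_single b]
    · rw [pr_apply_of_mem C hx, pr_apply_of_mem C hy]
    · intro b' _ hb'
      rw [pr_apply_of_mem_ne C (Ne.symm hb') hy]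
      simp
    · simp
  · intro a' _ ha'
    rw [pr_apply_of_mem_ne C (Ne.symm ha') hx]
    simp
  · simp

lemma tbr_left0 {x : L} (hx : x ∈ C.grade (0, 0)) (y : L) :
    tbr C x y = C.bracket x y := by
  rw [tbr_apply, Finset.sum_eq_single ((0, 0) : Z22)]
  · rw [pr_apply_of_mem C hx]
    simp only [sig_zero_left, one_smul]
    rw [← map_sum, sum_pr]
  · intro a' _ ha'
    rw [pr_apply_of_mem_ne C (Ne.symm ha') hx]
    simp
  · simp

lemma tbr_right0 {y : L} (hy : y ∈ C.grade (0, 0)) (x : L) :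
    tbr C x y = C.bracket x y := by
  rw [tbr_apply, Finset.sum_comm, Finset.sum_eq_single ((0, 0) : Z22)]
  · rw [pr_apply_of_mem C hy]
    simp only [sig_zero_right, one_smul]
    rw [← LinearMap.sum_apply, ← map_sum, sum_pr]
  · intro b' _ hb'
    rw [pr_apply_of_mem_ne C (Ne.symm hb') hy]
    simp
  · simp

lemma tbr_mem_grade {a b : Z22} {x y : L} (hx : x ∈ C.grade a) (hy : y ∈ C.grade b) :
    tbr C x y ∈ C.grade (a + b) := by
  rw [tbr_graded C hx hy]
  exact Submodule.smul_mem _ _ (C.bracket_grade a b x hx y hy)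

lemma tbr_antisymm (x y : L) : tbr C x y = - tbr C y x := by
  rw [tbr_apply, tbr_apply, ← Finset.sum_neg_distrib, Finset.sum_comm]
  refine Finset.sum_congr rfl fun a _ => ?_
  rw [← Finset.sum_neg_distrib]
  refine Finset.sum_congr rfl fun b _ => ?_
  rw [C.antisymm b a _ (pr_mem C b x) _ (pr_mem C a y), neg_smul, smul_neg, smul_smul,
    sig_mul_sgn]

lemma tbr_expand (x y : L) :
    tbr C x y = ∑ a : Z22, ∑ b : Z22, tbr C (pr C a x) (pr C b y) := by
  conv_lhs => rw [← sum_pr C x]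
  rw [map_sum, LinearMap.sum_apply]
  refine Finset.sum_congr rfl fun a _ => ?_
  conv_lhs => rw [← sum_pr C y]
  exact map_sum _ _ _

lemma tbr_leibniz_graded {a b c : Z22} {x y z : L}
    (hx : x ∈ C.grade a) (hy : y ∈ C.grade b) (hz : z ∈ C.grade c) :
    tbr C x (tbr C y z) = tbr C (tbr C x y) z + tbr C y (tbr C x z) := by
  have h1 : tbr C x (tbr C y z) =
      (sig b c * sig a (b + c)) • C.bracket x (C.bracket y z) := by
    rw [tbr_graded C hy hz, map_smul, tbr_graded C hx (C.bracket_grade b c y hy z hz),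
      smul_smul]
  have h2 : tbr C (tbr C x y) z =
      (sig a b * sig (a + b) c) • C.bracket (C.bracket x y) z := by
    rw [tbr_graded C hx hy, LinearMap.map_smul₂,
      tbr_graded C (C.bracket_grade a b x hx y hy) hz, smul_smul]
  have h3 : tbr C y (tbr C x z) =
      (sig a c * sig b (a + c)) • C.bracket y (C.bracket x z) := by
    rw [tbr_graded C hx hz, map_smul, tbr_graded C hy (C.bracket_grade a c x hx z hz),
      smul_smul, mul_comm]
  rw [h1, h2, h3, C.jacobi a b x hx y hy z, smul_add,
    smul_smul (sig b c * sig a (b + c)) (sgn a b), sig_jacobi₂, sig_jacobi₁]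

lemma tbr_leibniz (x y z : L) :
    tbr C x (tbr C y z) = tbr C (tbr C x y) z + tbr C y (tbr C x z) := by
  have key : ∀ a b c : Z22,
      tbr C (pr C a x) (tbr C (pr C b y) (pr C c z)) =
        tbr C (tbr C (pr C a x) (pr C b y)) (pr C c z) +
          tbr C (pr C b y) (tbr C (pr C a x) (pr C c z)) :=
    fun a b c => tbr_leibniz_graded C (pr_mem C a x) (pr_mem C b y) (pr_mem C c z)
  have e1 : tbr C x (tbr C y z) =
      ∑ a : Z22, ∑ b : Z22, ∑ c : Z22,
        tbr C (pr C a x) (tbr C (pr C b y) (pr C c z)) := by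
    conv_lhs => rw [← sum_pr C x]
    rw [map_sum, LinearMap.sum_apply]
    refine Finset.sum_congr rfl fun a _ => ?_
    rw [tbr_expand C y z, map_sum]
    exact Finset.sum_congr rfl fun b _ => map_sum _ _ _
  have e2 : tbr C (tbr C x y) z =
      ∑ a : Z22, ∑ b : Z22, ∑ c : Z22,
        tbr C (tbr C (pr C a x) (pr C b y)) (pr C c z) := by
    conv_lhs => rw [tbr_expand C x y]
    rw [map_sum, LinearMap.sum_apply]
    refine Finset.sum_congr rfl fun a _ => ?_
    rw [map_sum, LinearMap.sum_apply]
    refine Finset.sum_congr rfl fun b _ => ?_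
    conv_lhs => rw [← sum_pr C z]
    exact map_sum _ _ _
  have e3 : tbr C y (tbr C x z) =
      ∑ a : Z22, ∑ b : Z22, ∑ c : Z22,
        tbr C (pr C b y) (tbr C (pr C a x) (pr C c z)) := by
    conv_lhs => rw [← sum_pr C y]
    rw [map_sum, LinearMap.sum_apply]
    have : ∀ b : Z22, tbr C (pr C b y) (tbr C x z) =
        ∑ a : Z22, ∑ c : Z22, tbr C (pr C b y) (tbr C (pr C a x) (pr C c z)) := by
      intro b
      rw [tbr_expand C x z, map_sum]
      exact Finset.sum_congr rfl fun a _ => map_sum _ _ _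
    rw [Finset.sum_congr rfl fun b _ => this b, Finset.sum_comm]
  rw [e1, e2, e3, ← Finset.sum_add_distrib]
  refine Finset.sum_congr rfl fun a _ => ?_
  rw [← Finset.sum_add_distrib]
  refine Finset.sum_congr rfl fun b _ => ?_
  rw [← Finset.sum_add_distrib]
  exact Finset.sum_congr rfl fun c _ => key a b c

end Twist
section LieStruct

variable {L : Type} [AddCommGroup L] [Module ℂ L]

/-- Type synonym carrying the discolored Lie algebra structure. -/
def LX (_C : ColorLie L) : Type := L

variable (C : ColorLie L)

instance : AddCommGroup (LX C) := inferInstanceAs (AddCommGroup L)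
instance : Module ℂ (LX C) := inferInstanceAs (Module ℂ L)
instance [FiniteDimensional ℂ L] : FiniteDimensional ℂ (LX C) :=
  inferInstanceAs (FiniteDimensional ℂ L)

noncomputable instance : LieRing (LX C) where
  bracket x y := tbr C x y
  add_lie x y z := by
    show tbr C (x + y) z = tbr C x z + tbr C y z
    exact LinearMap.map_add₂ (tbr C) x y z
  lie_add x y z := by
    show tbr C x (y + z) = tbr C x y + tbr C x z
    exact map_add _ _ _
  lie_self x := by
    show tbr C x x = 0
    have h := tbr_antisymm C x x
    have h2 : (2 : ℂ) • tbr C x x = 0 := by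
      rw [two_smul]
      nth_rewrite 2 [h]
      exact add_neg_cancel _
    simpa using (smul_eq_zero.mp h2).resolve_left (by norm_num)
  leibniz_lie x y z := tbr_leibniz C x y z

noncomputable instance : LieAlgebra ℂ (LX C) where
  lie_smul c x y := map_smul (tbr C x) c y

lemma lx_bracket (x y : LX C) : ⁅x, y⁆ = tbr C x y := rfl

end LieStruct
section Killing

variable {L : Type} [AddCommGroup L] [Module ℂ L] (C : ColorLie L)

lemma killing_def (x y : L) :
    killing C x y = LinearMap.trace ℂ L (C.bracket x ∘ₗ C.bracket y) := rfl

lemma killing_symm (x y : L) : killing C x y = killing C y x :=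
  LinearMap.trace_mul_comm ℂ (C.bracket x) (C.bracket y)

/-- The bundled Killing form of `C`. -/
noncomputable def kB : L →ₗ[ℂ] L →ₗ[ℂ] ℂ :=
  LinearMap.mk₂ ℂ (fun x y => killing C x y)
    (fun x x' y => by simp [killing_def, map_add, LinearMap.add_comp])
    (fun c x y => by simp [killing_def, map_smul, LinearMap.smul_comp])
    (fun x y y' => by simp [killing_def, map_add, LinearMap.comp_add])
    (fun c x y => by simp [killing_def, map_smul, LinearMap.comp_smul])

lemma kB_apply (x y : L) : kB C x y = killing C x y := rfl

variable [FiniteDimensional ℂ L]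

lemma trace_shift_eq_zero {d : Z22} (hd : d ≠ 0) (f : L →ₗ[ℂ] L)
    (hf : ∀ c : Z22, ∀ z ∈ C.grade c, f z ∈ C.grade (d + c)) :
    LinearMap.trace ℂ L f = 0 := by
  have hfe : f = ∑ c : Z22, f ∘ₗ pr C c := by
    ext z
    rw [LinearMap.sum_apply]
    simp only [LinearMap.comp_apply]
    rw [← map_sum, sum_pr]
  rw [hfe, map_sum]
  refine Finset.sum_eq_zero fun c _ => ?_
  have h1 : f ∘ₗ pr C c = (f ∘ₗ pr C c) ∘ₗ pr C c := by
    ext z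
    simp [pr_apply_of_mem C (pr_mem C c z)]
  have h2 : pr C c ∘ₗ (f ∘ₗ pr C c) = 0 := by
    ext z
    have : f (pr C c z) ∈ C.grade (d + c) := hf c _ (pr_mem C c z)
    have hne : d + c ≠ c := fun h => hd (by simpa using h)
    simp [pr_apply_of_mem_ne C hne this]
  rw [h1, LinearMap.trace_comp_comm', h2]
  simp

lemma killing_eq_zero_of_ne {a b : Z22} (hab : a + b ≠ 0) {x y : L}
    (hx : x ∈ C.grade a) (hy : y ∈ C.grade b) : killing C x y = 0 := by
  rw [killing_def]
  refine trace_shift_eq_zero C hab _ fun c z hz => ?_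
  have h1 := C.bracket_grade b c y hy z hz
  have h2 := C.bracket_grade a (b + c) x hx _ h1
  rw [← add_assoc] at h2
  exact h2

lemma lx_toEnd (x : LX C) :
    (LieModule.toEnd ℂ (LX C) (LX C) x : LX C →ₗ[ℂ] LX C) = tbr C x := by
  ext m
  simp only [LieModule.toEnd_apply_apply, lx_bracket]
  exact rfl

lemma lx_killingForm (x y : LX C) :
    killingForm ℂ (LX C) x y = LinearMap.trace ℂ L (tbr C x ∘ₗ tbr C y) := by
  have h : killingForm ℂ (LX C) x y =
      LinearMap.trace ℂ (LX C)
        ((LieModule.toEnd ℂ (LX C) (LX C) x) ∘ₗ (LieModule.toEnd ℂ (LX C) (LX C) y)) :=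
    LieModule.traceForm_apply_apply ℂ (LX C) (LX C) x y
  rw [h, lx_toEnd, lx_toEnd]
  rfl

lemma tbr_comp_eq {a : Z22} {x y : L} (hx : x ∈ C.grade a) (hy : y ∈ C.grade a) :
    tbr C x ∘ₗ tbr C y = esgn a • (C.bracket x ∘ₗ C.bracket y) := by
  ext z
  simp only [LinearMap.comp_apply, LinearMap.smul_apply]
  conv_lhs => rw [← sum_pr C z]
  rw [map_sum, map_sum]
  have : ∀ c : Z22, tbr C x (tbr C y (pr C c z)) =
      esgn a • C.bracket x (C.bracket y (pr C c z)) := by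
    intro c
    rw [tbr_graded C hy (pr_mem C c z), map_smul,
      tbr_graded C hx (C.bracket_grade a c y hy _ (pr_mem C c z)), smul_smul, sig_self_shift]
  rw [Finset.sum_congr rfl fun c _ => this c, ← Finset.smul_sum, ← map_sum, ← map_sum, sum_pr]

lemma lx_killingForm_graded_eq {a : Z22} {x y : L}
    (hx : x ∈ C.grade a) (hy : y ∈ C.grade a) :
    killingForm ℂ (LX C) x y = esgn a * killing C x y := by
  refine (lx_killingForm C x y).trans ?_
  rw [tbr_comp_eq C hx hy, map_smul, smul_eq_mul, killing_def]

lemma lx_killingForm_graded_ne {a b : Z22} (hab : a ≠ b) {x y : L}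
    (hx : x ∈ C.grade a) (hy : y ∈ C.grade b) :
    killingForm ℂ (LX C) x y = 0 := by
  have hab' : a + b ≠ 0 := by
    intro h
    apply hab
    have : a + b + b = b := by rw [h, zero_add]
    rwa [add_assoc, (by decide : ∀ u : Z22, u + u = 0) b, add_zero] at this
  refine (lx_killingForm C x y).trans ?_
  refine trace_shift_eq_zero C hab' _ fun c z hz => ?_
  have h1 := tbr_mem_grade C hy hz
  have h2 := tbr_mem_grade C hx h1
  rw [← add_assoc] at h2
  exact h2

/-- The involution `θ` acting by `(-1)^{a₁a₂}` on the graded component `a`. -/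
noncomputable def th : L →ₗ[ℂ] L := ∑ a : Z22, esgn a • pr C a

lemma th_apply (x : L) : th C x = ∑ a : Z22, esgn a • pr C a x := by
  simp [th, LinearMap.sum_apply]

lemma th_apply_of_mem {a : Z22} {x : L} (hx : x ∈ C.grade a) : th C x = esgn a • x := by
  rw [th_apply, Finset.sum_eq_single a]
  · rw [pr_apply_of_mem C hx]
  · intro b _ hb
    rw [pr_apply_of_mem_ne C (Ne.symm hb) hx, smul_zero]
  · simp

lemma th_th (x : L) : th C (th C x) = x := by
  rw [th_apply C x, map_sum]
  have : ∀ a : Z22, th C (esgn a • pr C a x) = pr C a x := by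
    intro a
    rw [map_smul, th_apply_of_mem C (pr_mem C a x), smul_smul, esgn_mul_self, one_smul]
  rw [Finset.sum_congr rfl fun a _ => this a, sum_pr]

lemma lx_killingForm_eq (x y : L) :
    killingForm ℂ (LX C) x y = killing C (th C x) y := by
  have e1 : killingForm ℂ (LX C) x y =
      ∑ a : Z22, ∑ b : Z22, killingForm ℂ (LX C) (pr C a x) (pr C b y) := by
    conv_lhs => rw [← sum_pr C x]
    erw [map_sum, LinearMap.sum_apply]
    refine Finset.sum_congr rfl fun a _ => ?_
    conv_lhs => rw [← sum_pr C y]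
    exact map_sum _ _ _
  have e2 : killing C (th C x) y =
      ∑ a : Z22, ∑ b : Z22, esgn a * killing C (pr C a x) (pr C b y) := by
    rw [← kB_apply, th_apply, map_sum, LinearMap.sum_apply]
    refine Finset.sum_congr rfl fun a _ => ?_
    rw [map_smul, LinearMap.smul_apply]
    conv_lhs => rw [← sum_pr C y]
    rw [map_sum, Finset.smul_sum]
    refine Finset.sum_congr rfl fun b _ => ?_
    rw [kB_apply, smul_eq_mul]
  rw [e1, e2]
  refine Finset.sum_congr rfl fun a _ => Finset.sum_congr rfl fun b _ => ?_
  by_cases hab : a = b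
  · subst hab
    rw [lx_killingForm_graded_eq C (pr_mem C a x) (pr_mem C a y)]
  · have hab' : a + b ≠ 0 := by
      intro h
      apply hab
      have : a + b + b = b := by rw [h, zero_add]
      rwa [add_assoc, (by decide : ∀ u : Z22, u + u = 0) b, add_zero] at this
    rw [lx_killingForm_graded_ne C hab (pr_mem C a x) (pr_mem C b y),
      killing_eq_zero_of_ne C hab' (pr_mem C a x) (pr_mem C b y), mul_zero]

theorem lx_isKilling (hnd : IsKillingNondeg C) : LieAlgebra.IsKilling ℂ (LX C) := by
  constructor
  rw [eq_bot_iff]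
  intro x hx
  rw [LieIdeal.mem_killingCompl] at hx
  have hz : ∀ z : L, killing C x z = 0 := by
    intro z
    have h1 := hx (th C z) (LieSubmodule.mem_top _)
    replace h1 := (lx_killingForm_eq C (th C z) x).symm.trans h1
    rw [th_th] at h1
    refine (killing_symm C x z).trans ?_
    exact h1
  have := hnd x hz
  simp [LieSubmodule.mem_bot]
  exact this

end Killing
section Cartan

variable {L : Type} [AddCommGroup L] [Module ℂ L] (C : ColorLie L)
variable (t : Submodule ℂ L) (hC : IsCartan C t)
variable (hself : ∀ x : L, (∀ h ∈ t, C.bracket x h = 0) ↔ x ∈ t)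

/-- The Cartan subalgebra of the discolored Lie algebra. -/
def lxCartan : LieSubalgebra ℂ (LX C) :=
  { t with
    lie_mem' := fun {x y} hx hy => by
      show tbr C x y ∈ t
      have e : tbr C x y = 0 := (tbr_left0 C (hC.le hx) y).trans ((hself x).mpr hx y hy)
      rw [e]
      exact zero_mem t }

lemma mem_lxCartan {x : LX C} : x ∈ lxCartan C t hC hself ↔ x ∈ t := Iff.rfl

lemma lxCartan_abelian : IsLieAbelian (lxCartan C t hC hself) := by
  constructor
  intro x y
  apply Subtype.ext
  show tbr C x.1 y.1 = 0
  exact (tbr_left0 C (hC.le x.2) y.1).trans ((hself x.1).mpr x.2 y.1 y.2)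

lemma lxCartan_isCartanSubalgebra :
    (lxCartan C t hC hself).IsCartanSubalgebra := by
  haveI := lxCartan_abelian C t hC hself
  refine ⟨inferInstance, ?_⟩
  refine le_antisymm ?_ (LieSubalgebra.le_normalizer _)
  intro x hx
  rw [LieSubalgebra.mem_normalizer_iff] at hx
  have hcond : ∀ h ∈ t, C.bracket x h ∈ t := by
    intro h hh
    have h1 := hx h hh
    exact Eq.mp (congrArg (· ∈ t) (tbr_right0 C (hC.le hh) x)) h1
  change L at x
  have key : ∀ a : Z22, a ≠ (0, 0) → pr C a x = 0 := by
    intro a ha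
    have hz : ∀ h ∈ t, C.bracket (pr C a x) h = 0 := by
      intro h hh
      have hsum : ∑ b : Z22, C.bracket (pr C b x) h = C.bracket x h := by
        rw [← LinearMap.sum_apply, ← map_sum, sum_pr]
      have hgr : ∀ b : Z22, C.bracket (pr C b x) h ∈ C.grade b := by
        intro b
        have := C.bracket_grade b (0, 0) _ (pr_mem C b x) h (hC.le hh)
        have e : (b + ((0, 0) : Z22)) = b := by
          show b + 0 = b
          rw [add_zero]
        rwa [e] at this
      have h2 : pr C a (C.bracket x h) = C.bracket (pr C a x) h := by
        conv_lhs => rw [← hsum]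
        rw [map_sum, Finset.sum_eq_single a]
        · exact pr_apply_of_mem C (hgr a)
        · intro b _ hb
          exact pr_apply_of_mem_ne C hb (hgr b)
        · simp
      have h3 : pr C a (C.bracket x h) = 0 :=
        pr_apply_of_mem_ne C (Ne.symm ha) (hC.le (hcond h hh))
      rw [← h2, h3]
    have hmem_t : pr C a x ∈ t := (hself _).mp hz
    have h1 : pr C a (pr C a x) = pr C a x := pr_apply_of_mem C (pr_mem C a x)
    have h2 : pr C a (pr C a x) = 0 :=
      pr_apply_of_mem_ne C (Ne.symm ha) (hC.le hmem_t)
    rw [← h1, h2]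
  have hxg : x ∈ C.grade (0, 0) := by
    have hx0 : x = pr C (0, 0) x := by
      conv_lhs => rw [← sum_pr C x]
      rw [Finset.sum_eq_single ((0, 0) : Z22)]
      · intro b _ hb
        exact key b hb
      · simp
    rw [hx0]
    exact pr_mem C (0, 0) x
  show x ∈ t
  refine hC.self_normalizing x hxg fun h hh => ?_
  have ha := C.antisymm (0, 0) (0, 0) x hxg h (hC.le hh)
  have hs : sgn ((0, 0) : Z22) ((0, 0) : Z22) = 1 := by norm_num [sgn, eps]
  rw [hs] at ha
  have hb : C.bracket h x = - C.bracket x h := by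
    rw [ha]
    simp
  rw [hb]
  exact neg_mem (hcond h hh)

end Cartan
section Weights

variable {L : Type} [AddCommGroup L] [Module ℂ L] (C : ColorLie L)
variable (t : Submodule ℂ L) (hC : IsCartan C t)
variable (hself : ∀ x : L, (∀ h ∈ t, C.bracket x h = 0) ↔ x ∈ t)

lemma lxCartan_toEnd (x : lxCartan C t hC hself) :
    (LieModule.toEnd ℂ (lxCartan C t hC hself) (LX C) x : Module.End ℂ (LX C)) =
      adE C x.1 := by
  ext m
  rw [LieModule.toEnd_apply_apply]
  show tbr C x.1 m = C.bracket x.1 m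
  exact tbr_left0 C (hC.le x.2) m

lemma lx_genWeightSpace_eq [LieRing.IsNilpotent (lxCartan C t hC hself)]
    (δ : Module.Dual ℂ t) :
    (LieModule.genWeightSpace (LX C)
        (fun x : lxCartan C t hC hself => δ ⟨x.1, x.2⟩) :
      Submodule ℂ (LX C)) = genRootSpace C t δ := by
  ext m
  rw [LieSubmodule.mem_toSubmodule, LieModule.mem_genWeightSpace]
  unfold genRootSpace
  refine Iff.trans ?_ (Submodule.mem_iInf (R := ℂ) (M := L) _).symm
  constructor
  · intro hm h
    have h1 := hm ⟨h.1, h.2⟩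
    exact (Module.End.mem_maxGenEigenspace _ _ _).mpr
      ((congrArg (fun T : Module.End ℂ (LX C) =>
        ∃ k : ℕ, ((T - (δ h) • (1 : Module.End ℂ (LX C))) ^ k) m = 0)
          (lxCartan_toEnd C t hC hself ⟨h.1, h.2⟩)).mp h1)
  · intro hm x
    have h1 := (Module.End.mem_maxGenEigenspace _ _ _).mp (hm ⟨x.1, x.2⟩)
    exact (congrArg (fun T : Module.End ℂ (LX C) =>
      ∃ k : ℕ, ((T - (δ ⟨x.1, x.2⟩) • (1 : Module.End ℂ (LX C))) ^ k) m = 0)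
        (lxCartan_toEnd C t hC hself x)).mpr h1

lemma lxCartan_traceForm [FiniteDimensional ℂ L] (x y : lxCartan C t hC hself) :
    LieModule.traceForm ℂ (lxCartan C t hC hself) (LX C) x y = killing C x.1 y.1 := by
  rw [LieModule.traceForm_apply_apply, lxCartan_toEnd, lxCartan_toEnd]
  exact rfl

end Weights
open LieModule LieAlgebra.IsKilling in
/-- The Weyl group permutes the roots: for roots `α, β`,
`s_α(β) = β − 2(⟨β,α⟩/⟨α,α⟩)α` is again a root. -/
theorem stmt18 [FiniteDimensional ℂ L] (C : ColorLie L)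
    (hs : C.IsSimple) (hnd : IsKillingNondeg C) (hred : IsReductive0 C)
    (t : Submodule ℂ L) (hC : IsCartan C t)
    (hself : ∀ x : L, (∀ h ∈ t, C.bracket x h = 0) ↔ x ∈ t)
    (H : Module.Dual ℂ t → t)
    (hH : ∀ γ : Module.Dual ℂ t, ∀ x : t, γ x = killing C (H γ).1 x.1)
    (α β : Module.Dual ℂ t) (hα : IsRoot C t α) (hβ : IsRoot C t β) :
    IsRoot C t
      (β - (2 * killing C (H β).1 (H α).1 / killing C (H α).1 (H α).1) • α) := by
  classical
  haveI hk : LieAlgebra.IsKilling ℂ (LX C) := lx_isKilling C hnd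
  haveI hcs : (lxCartan C t hC hself).IsCartanSubalgebra :=
    lxCartan_isCartanSubalgebra C t hC hself
  -- construct the weights
  have hwsp : ∀ δ : Module.Dual ℂ t, genRootSpace C t δ ≠ ⊥ →
      genWeightSpace (LX C) (fun x : lxCartan C t hC hself => δ ⟨x.1, x.2⟩) ≠ ⊥ := by
    intro δ hδ hbot
    apply hδ
    have h2 := lx_genWeightSpace_eq C t hC hself δ
    rw [hbot] at h2
    rw [← h2]
    exact LieSubmodule.bot_toSubmodule
  let wα : Weight ℂ (lxCartan C t hC hself) (LX C) :=
    ⟨fun x => α ⟨x.1, x.2⟩, hwsp α hα.2⟩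
  let wβ : Weight ℂ (lxCartan C t hC hself) (LX C) :=
    ⟨fun x => β ⟨x.1, x.2⟩, hwsp β hβ.2⟩
  have hwβ : wβ.IsNonZero := by
    intro h0
    apply hβ.1
    ext h
    have h1 := congrFun h0 (⟨h.1, h.2⟩ : lxCartan C t hC hself)
    exact h1
  -- identify the dual element
  let u : lxCartan C t hC hself := ⟨(H α).1, (H α).2⟩
  have hu : (cartanEquivDual (lxCartan C t hC hself)).symm wα = u := by
    rw [LinearEquiv.symm_apply_eq]
    apply LinearMap.ext
    intro y
    rw [cartanEquivDual_apply_apply, lxCartan_toEnd, lxCartan_toEnd]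
    exact hH α ⟨y.1, y.2⟩
  have hwαu : wα u = killing C (H α).1 (H α).1 := by
    show α ⟨u.1, u.2⟩ = _
    rw [hH α ⟨u.1, u.2⟩]
  have hwβu : wβ u = killing C (H β).1 (H α).1 := by
    show β ⟨u.1, u.2⟩ = _
    rw [hH β ⟨u.1, u.2⟩]
  have hcor : coroot wα = (2 : ℕ) • (wα u)⁻¹ • u := by
    rw [coroot, hu]
  have hwβcor : wβ (coroot wα) =
      2 * killing C (H β).1 (H α).1 / killing C (H α).1 (H α).1 := by
    rw [hcor]
    have he : ((⟨((2 : ℕ) • (wα u)⁻¹ • u).1, ((2 : ℕ) • (wα u)⁻¹ • u).2⟩ : t)) =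
        (2 : ℕ) • (wα u)⁻¹ • (H α) := by
      apply Subtype.ext
      rfl
    show β (⟨((2 : ℕ) • (wα u)⁻¹ • u).1, ((2 : ℕ) • (wα u)⁻¹ • u).2⟩ : t) = _
    rw [he, map_nsmul, map_smul, hwαu, smul_eq_mul]
    have hβHα : β (H α) = killing C (H β).1 (H α).1 := hH β (H α)
    rw [nsmul_eq_mul, hβHα]
    rw [div_eq_mul_inv]
    ring
  -- the reflected functional agrees with the reflected root
  have hfun : (fun x : lxCartan C t hC hself =>
      (β - (2 * killing C (H β).1 (H α).1 / killing C (H α).1 (H α).1) • α) ⟨x.1, x.2⟩) =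
      ((reflectRoot wα wβ : Weight ℂ (lxCartan C t hC hself) (LX C)) :
        lxCartan C t hC hself → ℂ) := by
    funext x
    show β ⟨x.1, x.2⟩ -
        (2 * killing C (H β).1 (H α).1 / killing C (H α).1 (H α).1) * α ⟨x.1, x.2⟩ =
      (wβ : lxCartan C t hC hself → ℂ) x -
        wβ (coroot wα) • (wα : lxCartan C t hC hself → ℂ) x
    rw [hwβcor, smul_eq_mul]
    rfl
  constructor
  · intro h0
    have hz : ((reflectRoot wα wβ : Weight ℂ (lxCartan C t hC hself) (LX C)) :
        lxCartan C t hC hself → ℂ) = 0 := by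
      rw [← hfun]
      funext x
      rw [h0]
      simp
    exact reflectRoot_isNonZero wα wβ hwβ hz
  · intro hbot
    apply (reflectRoot wα wβ : Weight ℂ (lxCartan C t hC hself) (LX C)).genWeightSpace_ne_bot
    have h2 := lx_genWeightSpace_eq C t hC hself
      (β - (2 * killing C (H β).1 (H α).1 / killing C (H α).1 (H α).1) • α)
    rw [hbot] at h2
    rw [← hfun, ← LieSubmodule.toSubmodule_eq_bot]
    exact h2
end
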